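/- Let (μ, ω, λ) and (μ̃, ω̃, λ̃) be univariate skew normal parameters (ω, ω̃ > 0), with Δ = ω·λ/√(1+λ²), Γ = ω²/(1+λ²), and analogously Δ̃, Γ̃. Let CF and C̃F denote the corresponding skew normal characteristic functions CF(t) = exp(iμt − t²ω²/2)·(1 + i·ℑ(Δt)) and C̃F(t) = exp(iμ̃t − t²ω̃²/2)·(1 + i·ℑ(Δ̃t)). If Γ ≠ Γ̃, then for every t ∈ ℝ with t ≠ 0, either lim_{c→∞} CF(ct)/C̃F(ct) = 0, or lim_{c→∞} |CF(ct)/C̃F(ct)| = ∞. -/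

import Mathlib

open Filter

noncomputable section

/-- ℑ(x) = ∫₀ˣ √(2/π)·exp(u²/2) du. -/
def ImInt (x : ℝ) : ℝ := ∫ u in (0:ℝ)..x, Real.sqrt (2 / Real.pi) * Real.exp (u ^ 2 / 2)

/-- The skew normal characteristic function of SN(μ, ω, λ),
with Δ = ω·λ/√(1+λ²). -/
def snCF (μ ω lam : ℝ) (t : ℝ) : ℂ :=
  Complex.exp (Complex.I * (μ : ℂ) * (t : ℂ) - ((t ^ 2 * ω ^ 2 / 2 : ℝ) : ℂ)) *
    (1 + Complex.I * ((ImInt (ω * lam / Real.sqrt (1 + lam ^ 2) * t) : ℝ) : ℂ))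

/- ### Auxiliary lemmas -/

lemma imInt_integrand_cont :
    Continuous (fun u : ℝ => Real.sqrt (2 / Real.pi) * Real.exp (u ^ 2 / 2)) := by
  continuity

lemma ImInt_neg (x : ℝ) : ImInt (-x) = - ImInt x := by
  unfold ImInt
  have h := intervalIntegral.integral_comp_neg
    (a := x) (b := 0) (fun u : ℝ => Real.sqrt (2 / Real.pi) * Real.exp (u ^ 2 / 2))
  simp only [neg_zero] at h
  rw [← h]
  simp only [neg_sq]
  exact intervalIntegral.integral_symm 0 x

lemma ImInt_sq_abs (x : ℝ) : ImInt x ^ 2 = ImInt |x| ^ 2 := by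
  rcases abs_cases x with ⟨h, _⟩ | ⟨h, _⟩
  · rw [h]
  · rw [h, ImInt_neg, neg_sq]

lemma ImInt_nonneg {x : ℝ} (hx : 0 ≤ x) : 0 ≤ ImInt x := by
  apply intervalIntegral.integral_nonneg hx
  intro u _
  positivity

lemma ImInt_le {x : ℝ} (hx : 0 ≤ x) :
    ImInt x ≤ Real.sqrt (2 / Real.pi) * x * Real.exp (x ^ 2 / 2) := by
  have h : ImInt x ≤ ∫ _ in (0:ℝ)..x, Real.sqrt (2 / Real.pi) * Real.exp (x ^ 2 / 2) := by
    apply intervalIntegral.integral_mono_on hx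
      (imInt_integrand_cont.intervalIntegrable _ _)
      ((continuous_const).intervalIntegrable _ _)
    intro u hu
    exact mul_le_mul_of_nonneg_left
      (Real.exp_le_exp.mpr (by nlinarith [hu.1, hu.2])) (Real.sqrt_nonneg _)
  calc ImInt x ≤ _ := h
    _ = Real.sqrt (2 / Real.pi) * x * Real.exp (x ^ 2 / 2) := by
      rw [intervalIntegral.integral_const, smul_eq_mul]; ring

lemma ImInt_ge {x : ℝ} (hx : 1 ≤ x) :
    Real.sqrt (2 / Real.pi) * Real.exp ((x - 1) ^ 2 / 2) ≤ ImInt x := by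
  have h0 : (0:ℝ) ≤ x - 1 := by linarith
  have hsplit : (∫ u in (0:ℝ)..(x-1), Real.sqrt (2 / Real.pi) * Real.exp (u ^ 2 / 2))
      + (∫ u in (x-1)..x, Real.sqrt (2 / Real.pi) * Real.exp (u ^ 2 / 2)) = ImInt x :=
    intervalIntegral.integral_add_adjacent_intervals
      (imInt_integrand_cont.intervalIntegrable _ _) (imInt_integrand_cont.intervalIntegrable _ _)
  have h1 : (0:ℝ) ≤ ∫ u in (0:ℝ)..(x-1), Real.sqrt (2 / Real.pi) * Real.exp (u ^ 2 / 2) := by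
    apply intervalIntegral.integral_nonneg h0
    intro u _; positivity
  have h2 : Real.sqrt (2 / Real.pi) * Real.exp ((x - 1) ^ 2 / 2)
      ≤ ∫ u in (x-1)..x, Real.sqrt (2 / Real.pi) * Real.exp (u ^ 2 / 2) := by
    have h := intervalIntegral.integral_mono_on (by linarith : x - 1 ≤ x)
      ((continuous_const).intervalIntegrable _ _)
      (imInt_integrand_cont.intervalIntegrable _ _)
      (μ := MeasureTheory.volume)
      (f := fun _ => Real.sqrt (2 / Real.pi) * Real.exp ((x - 1) ^ 2 / 2))
      (fun u hu => mul_le_mul_of_nonneg_left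
        (Real.exp_le_exp.mpr (by nlinarith [hu.1, hu.2])) (Real.sqrt_nonneg _))
    calc Real.sqrt (2 / Real.pi) * Real.exp ((x - 1) ^ 2 / 2)
        = ∫ _ in (x-1)..x, Real.sqrt (2 / Real.pi) * Real.exp ((x - 1) ^ 2 / 2) := by
          rw [intervalIntegral.integral_const, smul_eq_mul]; ring
      _ ≤ _ := h
  rw [← hsplit]; linarith

lemma exp_sq (y : ℝ) : Real.exp y ^ 2 = Real.exp (2 * y) := by
  rw [pow_two, ← Real.exp_add]; ring_nf

lemma sq_twopi : Real.sqrt (2 / Real.pi) ^ 2 = 2 / Real.pi :=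
  Real.sq_sqrt (by positivity)

lemma key_upper {x : ℝ} (hx : 0 ≤ x) :
    Real.exp (-(x ^ 2)) * (1 + ImInt x ^ 2) ≤ Real.exp (1 + 2 * x) := by
  have h1 : ImInt x ^ 2 ≤ 2 / Real.pi * x ^ 2 * Real.exp (x ^ 2) := by
    have := pow_le_pow_left₀ (ImInt_nonneg hx) (ImInt_le hx) 2
    calc ImInt x ^ 2 ≤ (Real.sqrt (2 / Real.pi) * x * Real.exp (x ^ 2 / 2)) ^ 2 := this
      _ = 2 / Real.pi * x ^ 2 * Real.exp (x ^ 2) := by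
        rw [mul_pow, mul_pow, sq_twopi, exp_sq]; ring_nf
  have hπ : 2 / Real.pi ≤ 1 := by
    rw [div_le_one Real.pi_pos]; exact Real.two_le_pi
  have hx2 : x ^ 2 ≤ Real.exp (2 * x) := by
    have h : Real.exp (2 * x) = Real.exp x * Real.exp x := by
      rw [← Real.exp_add]; ring_nf
    rw [h]
    nlinarith [Real.exp_pos x, Real.add_one_le_exp x]
  have he1 : Real.exp (-(x ^ 2)) ≤ 1 := Real.exp_le_one_iff.mpr (neg_nonpos.mpr (sq_nonneg x))
  have hcancel : Real.exp (-(x ^ 2)) * Real.exp (x ^ 2) = 1 := by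
    rw [← Real.exp_add]; simp
  have h2 : Real.exp (-(x ^ 2)) * (1 + ImInt x ^ 2) ≤ 1 + x ^ 2 := by
    have hp := Real.exp_pos (-(x ^ 2))
    have h' : Real.exp (-(x ^ 2)) * ImInt x ^ 2 ≤ 2 / Real.pi * x ^ 2 := by
      calc Real.exp (-(x ^ 2)) * ImInt x ^ 2
          ≤ Real.exp (-(x ^ 2)) * (2 / Real.pi * x ^ 2 * Real.exp (x ^ 2)) :=
            mul_le_mul_of_nonneg_left h1 hp.le
        _ = 2 / Real.pi * x ^ 2 * (Real.exp (-(x ^ 2)) * Real.exp (x ^ 2)) := by ring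
        _ = 2 / Real.pi * x ^ 2 := by rw [hcancel, mul_one]
    nlinarith [sq_nonneg x]
  have h3 : (1 : ℝ) + x ^ 2 ≤ 2 * Real.exp (2 * x) := by
    have : (1:ℝ) ≤ Real.exp (2 * x) := Real.one_le_exp (by linarith)
    linarith
  have h4 : 2 * Real.exp (2 * x) ≤ Real.exp (1 + 2 * x) := by
    rw [Real.exp_add]
    have : (2:ℝ) ≤ Real.exp 1 := by
      have := Real.exp_one_gt_d9; linarith
    nlinarith [Real.exp_pos (2 * x)]
  linarith

lemma key_lower {x : ℝ} (h : x = 0 ∨ 1 ≤ x) :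
    Real.exp (-(1 + 2 * x)) ≤ Real.exp (-(x ^ 2)) * (1 + ImInt x ^ 2) := by
  rcases h with h | h
  · subst h
    simp only [ne_eq, zero_pow, neg_zero, Real.exp_zero, one_mul, mul_zero]
    norm_num
    nlinarith [Real.exp_le_one_iff.mpr (by norm_num : (-1:ℝ) ≤ 0), sq_nonneg (ImInt 0)]
  · have hx0 : (0:ℝ) ≤ x := by linarith
    have hge := ImInt_ge h
    have hsq : 2 / Real.pi * Real.exp ((x - 1) ^ 2) ≤ ImInt x ^ 2 := by
      have hnn : (0:ℝ) ≤ Real.sqrt (2 / Real.pi) * Real.exp ((x - 1) ^ 2 / 2) := by positivity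
      have := pow_le_pow_left₀ hnn hge 2
      calc 2 / Real.pi * Real.exp ((x - 1) ^ 2)
          = (Real.sqrt (2 / Real.pi) * Real.exp ((x - 1) ^ 2 / 2)) ^ 2 := by
            rw [mul_pow, sq_twopi, exp_sq]; ring_nf
        _ ≤ ImInt x ^ 2 := this
    have hπ : Real.exp (-1) ≤ 2 / Real.pi := by
      have h4 : Real.pi ≤ 4 := Real.pi_le_four
      have he : Real.exp (-1) ≤ 1 / 2 := by
        rw [Real.exp_neg]
        rw [inv_le_comm₀ (Real.exp_pos 1) (by norm_num)]
        have := Real.exp_one_gt_d9; linarith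
      have : (1:ℝ) / 2 ≤ 2 / Real.pi := by
        rw [div_le_div_iff₀ (by norm_num) Real.pi_pos]; linarith
      linarith
    have key : Real.exp (-1) * Real.exp (-(x ^ 2)) * Real.exp ((x - 1) ^ 2)
        ≤ Real.exp (-(x ^ 2)) * (1 + ImInt x ^ 2) := by
      have hp := Real.exp_pos (-(x ^ 2))
      calc Real.exp (-1) * Real.exp (-(x ^ 2)) * Real.exp ((x - 1) ^ 2)
          = Real.exp (-1) * (Real.exp (-(x ^ 2)) * Real.exp ((x - 1) ^ 2)) := by ring
        _ ≤ 2 / Real.pi * (Real.exp (-(x ^ 2)) * Real.exp ((x - 1) ^ 2)) :=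
            mul_le_mul_of_nonneg_right hπ
              (mul_nonneg hp.le (Real.exp_pos ((x - 1) ^ 2)).le)
        _ = 2 / Real.pi * Real.exp ((x - 1) ^ 2) * Real.exp (-(x ^ 2)) := by ring
        _ ≤ ImInt x ^ 2 * Real.exp (-(x ^ 2)) :=
            mul_le_mul_of_nonneg_right hsq hp.le
        _ ≤ Real.exp (-(x ^ 2)) * (1 + ImInt x ^ 2) := by nlinarith [hp]
    calc Real.exp (-(1 + 2 * x))
        ≤ Real.exp (-1) * Real.exp (-(x ^ 2)) * Real.exp ((x - 1) ^ 2) := by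
          rw [← Real.exp_add, ← Real.exp_add]
          apply Real.exp_le_exp.mpr
          nlinarith
      _ ≤ _ := key

lemma snCF_ne_zero (μ ω lam t : ℝ) : snCF μ ω lam t ≠ 0 := by
  apply mul_ne_zero (Complex.exp_ne_zero _)
  intro h
  have := congrArg Complex.re h
  simp [Complex.add_re, Complex.mul_re] at this

lemma snCF_absSq (μ ω lam t : ℝ) :
    ‖snCF μ ω lam t‖ ^ 2 =
      Real.exp (-(t ^ 2 * ω ^ 2)) *
        (1 + ImInt (ω * lam / Real.sqrt (1 + lam ^ 2) * t) ^ 2) := by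
  unfold snCF
  rw [norm_mul, mul_pow, Complex.norm_exp, Complex.sq_norm]
  congr 1
  · rw [← Real.exp_nat_mul]
    congr 1
    simp [Complex.sub_re, Complex.mul_re, ← Complex.ofReal_pow]
    ring
  · simp [Complex.normSq_apply]
    ring

lemma num_lb_ub {W Γ dd σ : ℝ} (hdd : 0 ≤ dd) (hσ : 0 ≤ σ)
    (hW : Γ + dd ^ 2 = W) (hcond : dd * σ = 0 ∨ 1 ≤ dd * σ) :
    Real.exp (-(σ ^ 2 * Γ) - (1 + 2 * (dd * σ)))
        ≤ Real.exp (-(σ ^ 2 * W)) * (1 + ImInt (dd * σ) ^ 2) ∧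
    Real.exp (-(σ ^ 2 * W)) * (1 + ImInt (dd * σ) ^ 2)
        ≤ Real.exp (-(σ ^ 2 * Γ) + (1 + 2 * (dd * σ))) := by
  have hsplit : Real.exp (-(σ ^ 2 * W))
      = Real.exp (-(σ ^ 2 * Γ)) * Real.exp (-((dd * σ) ^ 2)) := by
    rw [← Real.exp_add]; congr 1; rw [← hW]; ring
  have hup := key_upper (mul_nonneg hdd hσ)
  have hlo := key_lower (x := dd * σ) hcond
  constructor
  · calc Real.exp (-(σ ^ 2 * Γ) - (1 + 2 * (dd * σ)))
        = Real.exp (-(σ ^ 2 * Γ)) * Real.exp (-(1 + 2 * (dd * σ))) := by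
          rw [← Real.exp_add]; ring_nf
      _ ≤ Real.exp (-(σ ^ 2 * Γ)) * (Real.exp (-((dd * σ) ^ 2)) * (1 + ImInt (dd * σ) ^ 2)) :=
          mul_le_mul_of_nonneg_left hlo (Real.exp_pos _).le
      _ = Real.exp (-(σ ^ 2 * W)) * (1 + ImInt (dd * σ) ^ 2) := by rw [hsplit]; ring
  · calc Real.exp (-(σ ^ 2 * W)) * (1 + ImInt (dd * σ) ^ 2)
        = Real.exp (-(σ ^ 2 * Γ)) * (Real.exp (-((dd * σ) ^ 2)) * (1 + ImInt (dd * σ) ^ 2)) := by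
          rw [hsplit]; ring
      _ ≤ Real.exp (-(σ ^ 2 * Γ)) * Real.exp (1 + 2 * (dd * σ)) :=
          mul_le_mul_of_nonneg_left hup (Real.exp_pos _).le
      _ = Real.exp (-(σ ^ 2 * Γ) + (1 + 2 * (dd * σ))) := by rw [← Real.exp_add]

lemma tendsto_quad {A B : ℝ} (hA : 0 < A) :
    Tendsto (fun x : ℝ => A * x ^ 2 - (2 + 2 * B * x)) atTop atTop := by
  apply tendsto_atTop_mono' atTop _ tendsto_id
  filter_upwards [eventually_ge_atTop ((2 * B + 3) / A), eventually_ge_atTop 1] with x h1 h2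
  have h3 : 2 * B + 3 ≤ A * x := by rw [div_le_iff₀ hA] at h1; linarith
  have h4 := mul_le_mul_of_nonneg_right h3 (by linarith : (0:ℝ) ≤ x)
  show id x ≤ _
  simp only [id]
  nlinarith

lemma le_exp_half {F e : ℝ} (hF : 0 ≤ F) (h : F ^ 2 ≤ Real.exp e) : F ≤ Real.exp (e / 2) := by
  have h2 : Real.exp e = Real.exp (e / 2) ^ 2 := by rw [exp_sq]; ring_nf
  nlinarith [Real.exp_pos (e / 2)]

lemma exp_half_le {F e : ℝ} (hF : 0 ≤ F) (h : Real.exp e ≤ F ^ 2) : Real.exp (e / 2) ≤ F := by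
  have h2 : Real.exp e = Real.exp (e / 2) ^ 2 := by rw [exp_sq]; ring_nf
  nlinarith [Real.exp_pos (e / 2)]

theorem stmt10 (μ ω lam μ' ω' lam' : ℝ) (hω : 0 < ω) (hω' : 0 < ω')
    (hΓ : ω ^ 2 / (1 + lam ^ 2) ≠ ω' ^ 2 / (1 + lam' ^ 2)) :
    ∀ t : ℝ, t ≠ 0 →
      Tendsto (fun c : ℝ => snCF μ ω lam (c * t) / snCF μ' ω' lam' (c * t))
        atTop (nhds 0) ∨
      Tendsto (fun c : ℝ => ‖snCF μ ω lam (c * t) / snCF μ' ω' lam' (c * t)‖)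
        atTop atTop := by
  intro t ht
  set Δ : ℝ := ω * lam / Real.sqrt (1 + lam ^ 2) with hΔdef
  set Δ' : ℝ := ω' * lam' / Real.sqrt (1 + lam' ^ 2) with hΔ'def
  set d : ℝ := |Δ| with hddef
  set d' : ℝ := |Δ'| with hd'def
  set Γ : ℝ := ω ^ 2 / (1 + lam ^ 2) with hΓdef
  set Γ' : ℝ := ω' ^ 2 / (1 + lam' ^ 2) with hΓ'def
  set B : ℝ := d + d' with hBdef
  have hd0 : 0 ≤ d := abs_nonneg _
  have hd'0 : 0 ≤ d' := abs_nonneg _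
  have h1lam : (0:ℝ) < 1 + lam ^ 2 := by positivity
  have h1lam' : (0:ℝ) < 1 + lam' ^ 2 := by positivity
  have hW : Γ + d ^ 2 = ω ^ 2 := by
    rw [hddef, sq_abs, hΔdef, div_pow, mul_pow, Real.sq_sqrt h1lam.le, hΓdef]
    field_simp
  have hW' : Γ' + d' ^ 2 = ω' ^ 2 := by
    rw [hd'def, sq_abs, hΔ'def, div_pow, mul_pow, Real.sq_sqrt h1lam'.le, hΓ'def]
    field_simp
  -- σ tends to infinity
  have hσtop : Tendsto (fun c : ℝ => |c * t|) atTop atTop := by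
    have h : Tendsto (fun c : ℝ => |c| * |t|) atTop atTop :=
      tendsto_abs_atTop_atTop.atTop_mul_const (abs_pos.mpr ht)
    simpa [abs_mul] using h
  -- the squared modulus formula
  set F : ℝ → ℝ := fun c => ‖snCF μ ω lam (c * t) / snCF μ' ω' lam' (c * t)‖
    with hFdef
  have hF0 : ∀ c, 0 ≤ F c := fun c => norm_nonneg _
  have hFsq : ∀ c, F c ^ 2 =
      (Real.exp (-(|c * t| ^ 2 * ω ^ 2)) * (1 + ImInt (d * |c * t|) ^ 2)) /
      (Real.exp (-(|c * t| ^ 2 * ω' ^ 2)) * (1 + ImInt (d' * |c * t|) ^ 2)) := by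
    intro c
    rw [hFdef]
    simp only
    rw [norm_div, div_pow, snCF_absSq, snCF_absSq,
      ImInt_sq_abs (Δ * (c * t)), ImInt_sq_abs (Δ' * (c * t)),
      abs_mul Δ (c * t), abs_mul Δ' (c * t), ← sq_abs (c * t)]
  -- eventual two-sided exponential bounds
  have hcond : ∀ᶠ c in atTop,
      (d * |c * t| = 0 ∨ 1 ≤ d * |c * t|) ∧ (d' * |c * t| = 0 ∨ 1 ≤ d' * |c * t|) := by
    have hone : ∀ (e : ℝ), 0 ≤ e → ∀ᶠ c in atTop, (e * |c * t| = 0 ∨ 1 ≤ e * |c * t|) := by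
      intro e he
      rcases eq_or_lt_of_le he with h | h
      · exact Eventually.of_forall fun c => Or.inl (by rw [← h]; ring)
      · have : Tendsto (fun c : ℝ => e * |c * t|) atTop atTop :=
          hσtop.const_mul_atTop h
        exact (this.eventually_ge_atTop 1).mono fun c hc => Or.inr hc
    exact (hone d hd0).and (hone d' hd'0)
  have hbounds : ∀ᶠ c in atTop,
      Real.exp ((Γ' - Γ) * |c * t| ^ 2 - (2 + 2 * B * |c * t|)) ≤ F c ^ 2 ∧
      F c ^ 2 ≤ Real.exp ((Γ' - Γ) * |c * t| ^ 2 + (2 + 2 * B * |c * t|)) := by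
    filter_upwards [hcond] with c hc
    set σ : ℝ := |c * t| with hσdef
    have hσ0 : 0 ≤ σ := abs_nonneg _
    have hn := num_lb_ub hd0 hσ0 hW hc.1
    have hn' := num_lb_ub hd'0 hσ0 hW' hc.2
    have hDpos : 0 < Real.exp (-(σ ^ 2 * ω' ^ 2)) * (1 + ImInt (d' * σ) ^ 2) := by positivity
    have hNpos : 0 ≤ Real.exp (-(σ ^ 2 * ω ^ 2)) * (1 + ImInt (d * σ) ^ 2) := by positivity
    constructor
    · rw [hFsq c]
      calc Real.exp ((Γ' - Γ) * σ ^ 2 - (2 + 2 * B * σ))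
          = Real.exp (-(σ ^ 2 * Γ) - (1 + 2 * (d * σ))) /
            Real.exp (-(σ ^ 2 * Γ') + (1 + 2 * (d' * σ))) := by
            rw [← Real.exp_sub]; congr 1; rw [hBdef]; ring
        _ ≤ _ := div_le_div₀ hNpos hn.1 hDpos hn'.2
    · rw [hFsq c]
      calc _ ≤ Real.exp (-(σ ^ 2 * Γ) + (1 + 2 * (d * σ))) /
            Real.exp (-(σ ^ 2 * Γ') - (1 + 2 * (d' * σ))) :=
            div_le_div₀ (Real.exp_pos _).le hn.2 (Real.exp_pos _) hn'.1
        _ = Real.exp ((Γ' - Γ) * σ ^ 2 + (2 + 2 * B * σ)) := by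
            rw [← Real.exp_sub]; congr 1; rw [hBdef]; ring
  -- case split on the sign of Γ' - Γ
  have hA : Γ' - Γ ≠ 0 := sub_ne_zero.mpr (Ne.symm hΓ)
  rcases hA.lt_or_gt with hAneg | hApos
  · -- Γ' < Γ : the ratio tends to 0
    left
    rw [tendsto_zero_iff_norm_tendsto_zero]
    apply squeeze_zero' (Eventually.of_forall hF0)
    · filter_upwards [hbounds] with c hc
      exact le_exp_half (hF0 c) hc.2
    · -- exp of (A σ² + stuff)/2 → 0
      have hq : Tendsto (fun x : ℝ => (Γ - Γ') * x ^ 2 - (2 + 2 * B * x)) atTop atTop :=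
        tendsto_quad (by linarith)
      have hcomp : Tendsto
          (fun c : ℝ => ((Γ' - Γ) * |c * t| ^ 2 + (2 + 2 * B * |c * t|)) / 2) atTop atBot := by
        have h1 : Tendsto
            (fun c : ℝ => (Γ - Γ') * |c * t| ^ 2 - (2 + 2 * B * |c * t|)) atTop atTop :=
          hq.comp hσtop
        have h2 := (tendsto_neg_atTop_atBot.comp h1).atBot_div_const (by norm_num : (0:ℝ) < 2)
        convert h2 using 2 with c
        simp only [Function.comp]
        ring
      exact Real.tendsto_exp_atBot.comp hcomp
  · -- Γ < Γ' : the modulus tends to ∞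
    right
    have hq : Tendsto (fun x : ℝ => (Γ' - Γ) * x ^ 2 - (2 + 2 * B * x)) atTop atTop :=
      tendsto_quad hApos
    have hg : Tendsto
        (fun c : ℝ => ((Γ' - Γ) * |c * t| ^ 2 - (2 + 2 * B * |c * t|)) / 2) atTop atTop :=
      ((hq.comp hσtop).atTop_div_const (by norm_num : (0:ℝ) < 2))
    apply tendsto_atTop_mono' atTop _ (Real.tendsto_exp_atTop.comp hg)
    filter_upwards [hbounds] with c hc
    exact exp_half_le (hF0 c) hc.1
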